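/- arXiv:1910.00667 — 6 statements merged into one kernel-verified Lean document; each statement's English description precedes it below -/
import Mathlib

section
/- If A is a symmetric n×n matrix and B is positive semidefinite, then ‖A‖ · (I ⊙ B) − A ⊙ B is positive semidefinite, where ‖A‖ is the operator norm, I the identity matrix, and ⊙ the Hadamard product. (Note I ⊙ B is the diagonal of B.) -/
open Matrix
open scoped Matrix.Norms.L2Operator

/-- Schur product theorem over ℝ. -/
lemma schur_product_psd {n : ℕ} {C B : Matrix (Fin n) (Fin n) ℝ}
    (hC : C.PosSemidef) (hB : B.PosSemidef) : (C ⊙ B).PosSemidef := by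
  exact hC.hadamard hB

/-- If `A` is symmetric and `B` positive semidefinite, then
`‖A‖ • (I ⊙ B) − A ⊙ B` is positive semidefinite, where `‖A‖` is the operator norm. -/
theorem hadamard_opNorm_diag_posSemidef {n : ℕ} (A B : Matrix (Fin n) (Fin n) ℝ)
    (hA : A.IsSymm) (hB : B.PosSemidef) :
    (‖A‖ • ((1 : Matrix (Fin n) (Fin n) ℝ) ⊙ B) - A ⊙ B).PosSemidef := by
  have hA' : A.IsHermitian := by
    rwa [IsHermitian, conjTranspose_eq_transpose_of_trivial]
  have hC : (‖A‖ • (1 : Matrix (Fin n) (Fin n) ℝ) - A).PosSemidef := by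
    rw [posSemidef_iff_dotProduct_mulVec]
    constructor
    · rw [IsHermitian, conjTranspose_sub, conjTranspose_smul, conjTranspose_one, hA',
        star_trivial]
    · intro x
      have hx : x ⬝ᵥ (A *ᵥ x) ≤ ‖A‖ * (x ⬝ᵥ x) := by
        set x' : EuclideanSpace ℝ (Fin n) := (EuclideanSpace.equiv (Fin n) ℝ).symm x with hx'
        have h1 : x ⬝ᵥ (A *ᵥ x) = inner ℝ x' ((EuclideanSpace.equiv (Fin n) ℝ).symm (A *ᵥ x)) := by
          simp [EuclideanSpace.inner_eq_star_dotProduct]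
          exact dotProduct_comm _ _
        have h2 : x ⬝ᵥ x = ‖x'‖ ^ 2 := by
          rw [← real_inner_self_eq_norm_sq]
          rw [EuclideanSpace.inner_eq_star_dotProduct]
          rfl
        rw [h1, h2]
        calc inner ℝ x' ((EuclideanSpace.equiv (Fin n) ℝ).symm (A *ᵥ x))
            ≤ ‖x'‖ * ‖(EuclideanSpace.equiv (Fin n) ℝ).symm (A *ᵥ x)‖ := real_inner_le_norm _ _
          _ ≤ ‖x'‖ * (‖A‖ * ‖x'‖) := by
              refine mul_le_mul_of_nonneg_left ?_ (norm_nonneg _)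
              exact A.l2_opNorm_mulVec x'
          _ = ‖A‖ * ‖x'‖ ^ 2 := by ring
      have : star x ⬝ᵥ ((‖A‖ • (1 : Matrix (Fin n) (Fin n) ℝ) - A) *ᵥ x)
          = ‖A‖ * (x ⬝ᵥ x) - x ⬝ᵥ (A *ᵥ x) := by
        rw [sub_mulVec, dotProduct_sub, smul_mulVec, one_mulVec, dotProduct_smul]
        simp [smul_eq_mul]
      rw [this]
      linarith
  have heq : (‖A‖ • (1 : Matrix (Fin n) (Fin n) ℝ) - A) ⊙ B
      = ‖A‖ • ((1 : Matrix (Fin n) (Fin n) ℝ) ⊙ B) - A ⊙ B := by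
    ext i j
    simp only [hadamard_apply, Matrix.sub_apply, Matrix.smul_apply, smul_eq_mul]
    ring
  exact heq ▸ schur_product_psd hC hB
end

section
/- Under the MCAR model with δ^(k) i.i.d., independent of x^(k), if P̂_{ij} > 0 for all i,j (every pair of coordinates is jointly observed at least once), then the empirically-normalized estimator Σ̂ = (1/N) Σ_k y^(k) y^(k)ᵀ ⊙ Γ̂ is an unbiased estimator of Σ: E[Σ̂] = Σ. -/
open MeasureTheory ProbabilityTheory

/-- Under the MCAR model, if the empirical joint observation probabilities
`P̂ ω i j = (1/N) ∑ₖ δ⁽ᵏ⁾ᵢ δ⁽ᵏ⁾ⱼ` are positive (every pair jointly observed at least once),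
then the empirically-normalized estimator
`Σ̂ = (1/N) ∑ₖ y⁽ᵏ⁾ y⁽ᵏ⁾ᵀ ⊙ Γ̂`, with `Γ̂` the entrywise inverse of `P̂`, is unbiased. -/
theorem mcar_empirical_prob_unbiased {Ω : Type*} [MeasureSpace Ω]
    (μ : Measure Ω) [IsProbabilityMeasure μ] {n N : ℕ} (hN : 0 < N)
    (x δ : Fin N → Ω → Fin n → ℝ)
    (S : Matrix (Fin n) (Fin n) ℝ)
    (hxm : ∀ k, Measurable (x k)) (hδm : ∀ k, Measurable (δ k))
    -- the whole collection of missing-data patterns is independent of the whole data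
    (hind : IndepFun (fun ω k => x k ω) (fun ω k => δ k ω) μ)
    (hδ01 : ∀ k ω i, δ k ω i = 0 ∨ δ k ω i = 1)
    (hiid : ∀ k l, Measure.map (x k) μ = Measure.map (x l) μ)
    (hmean : ∀ k i, ∫ ω, x k ω i ∂μ = 0)
    (hcov : ∀ k i j, ∫ ω, x k ω i * x k ω j ∂μ = S i j)
    (hcov_int : ∀ k i j, Integrable (fun ω => x k ω i * x k ω j) μ)
    -- all pairs of coordinates are jointly observed at least once
    (hPpos : ∀ ω i j, 0 < (N : ℝ)⁻¹ * ∑ k, δ k ω i * δ k ω j) :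
    ∀ i j, ∫ ω, (N : ℝ)⁻¹ * ∑ k, (δ k ω i * x k ω i) * (δ k ω j * x k ω j) *
        ((N : ℝ)⁻¹ * ∑ l, δ l ω i * δ l ω j)⁻¹ ∂μ = S i j := by
  intro i j
  have hδnn : ∀ k ω i, 0 ≤ δ k ω i := by
    intro k ω i; rcases hδ01 k ω i with h | h <;> rw [h] <;> norm_num
  set P : Ω → ℝ := fun ω => (N : ℝ)⁻¹ * ∑ l, δ l ω i * δ l ω j with hPdef
  set A : Fin N → Ω → ℝ := fun k ω => x k ω i * x k ω j with hAdef
  set B : Fin N → Ω → ℝ := fun k ω => (N : ℝ)⁻¹ * (δ k ω i * δ k ω j) * (P ω)⁻¹ with hBdef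
  have hδi : ∀ k, Measurable fun ω => δ k ω i := fun k =>
    (measurable_pi_apply i).comp (hδm k)
  have hδj : ∀ k, Measurable fun ω => δ k ω j := fun k =>
    (measurable_pi_apply j).comp (hδm k)
  have hPmeas : Measurable P :=
    measurable_const.mul (Finset.measurable_sum _ fun l _ => (hδi l).mul (hδj l))
  have hBmeas : ∀ k, Measurable (B k) := fun k =>
    (measurable_const.mul ((hδi k).mul (hδj k))).mul hPmeas.inv
  have hAmeas : ∀ k, Measurable (A k) := fun k =>
    ((measurable_pi_apply i).comp (hxm k)).mul ((measurable_pi_apply j).comp (hxm k))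
  have hB0 : ∀ k ω, 0 ≤ B k ω := by
    intro k ω
    exact mul_nonneg (mul_nonneg (by positivity) (mul_nonneg (hδnn k ω i) (hδnn k ω j)))
      (inv_nonneg.2 (hPpos ω i j).le)
  have hB1 : ∀ k ω, B k ω ≤ 1 := by
    intro k ω
    have hle : (N : ℝ)⁻¹ * (δ k ω i * δ k ω j) ≤ P ω := by
      refine mul_le_mul_of_nonneg_left ?_ (by positivity)
      exact Finset.single_le_sum (fun l _ => mul_nonneg (hδnn l ω i) (hδnn l ω j))
        (Finset.mem_univ k)
    have := mul_le_mul_of_nonneg_right hle (inv_nonneg.2 (hPpos ω i j).le)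
    calc B k ω ≤ P ω * (P ω)⁻¹ := this
      _ = 1 := mul_inv_cancel₀ (hPpos ω i j).ne'
  have hBint : ∀ k, Integrable (B k) μ := by
    intro k
    refine (integrable_const (1 : ℝ)).mono' (hBmeas k).aestronglyMeasurable ?_
    filter_upwards with ω
    rw [Real.norm_eq_abs, abs_of_nonneg (hB0 k ω)]
    exact hB1 k ω
  have hABint : ∀ k, Integrable (fun ω => A k ω * B k ω) μ := by
    intro k
    have := (hcov_int k i j).bdd_mul (hBmeas k).aestronglyMeasurable
      (c := 1) (Filter.Eventually.of_forall fun ω => by rw [Real.norm_eq_abs, abs_of_nonneg (hB0 k ω)]; exact hB1 k ω)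
    exact this.congr (Filter.Eventually.of_forall fun ω => mul_comm _ _)
  have hAB_indep : ∀ k, IndepFun (A k) (B k) μ := by
    intro k
    have hcoord : ∀ (l : Fin N) (a : Fin n), Measurable fun v : Fin N → Fin n → ℝ => v l a :=
      fun l a => (measurable_pi_apply a).comp (measurable_pi_apply l)
    have hφ : Measurable fun v : Fin N → Fin n → ℝ => v k i * v k j :=
      (hcoord k i).mul (hcoord k j)
    have hψ : Measurable fun w : Fin N → Fin n → ℝ =>
        (N : ℝ)⁻¹ * (w k i * w k j) * ((N : ℝ)⁻¹ * ∑ l, w l i * w l j)⁻¹ :=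
      (measurable_const.mul ((hcoord k i).mul (hcoord k j))).mul
        ((measurable_const.mul (Finset.measurable_sum _ fun l _ =>
          (hcoord l i).mul (hcoord l j))).inv)
    exact hind.comp hφ hψ
  have key : ∀ k, ∫ ω, A k ω * B k ω ∂μ = S i j * ∫ ω, B k ω ∂μ := by
    intro k
    have h := (hAB_indep k).integral_mul_eq_mul_integral (hAmeas k).aestronglyMeasurable
      (hBmeas k).aestronglyMeasurable
    have hA : integral μ (A k) = S i j := hcov k i j
    calc ∫ ω, A k ω * B k ω ∂μ = integral μ (A k * B k) := rfl
      _ = integral μ (A k) * integral μ (B k) := h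
      _ = S i j * ∫ ω, B k ω ∂μ := by rw [hA]
  have hsumB : ∀ ω, ∑ k, B k ω = 1 := by
    intro ω
    have : ∑ k, B k ω = P ω * (P ω)⁻¹ := by
      rw [← Finset.sum_mul, ← Finset.mul_sum]
    rw [this, mul_inv_cancel₀ (hPpos ω i j).ne']
  have hrw : (fun ω => (N : ℝ)⁻¹ * ∑ k, (δ k ω i * x k ω i) * (δ k ω j * x k ω j) *
      ((N : ℝ)⁻¹ * ∑ l, δ l ω i * δ l ω j)⁻¹) = fun ω => ∑ k, A k ω * B k ω := by
    funext ω
    rw [Finset.mul_sum]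
    refine Finset.sum_congr rfl fun k _ => ?_
    simp only [hAdef, hBdef, hPdef]
    ring
  rw [hrw, integral_finset_sum _ fun k _ => hABint k]
  simp_rw [key]
  rw [← Finset.mul_sum, ← integral_finset_sum _ fun k _ => hBint k]
  have : ∫ ω, ∑ k, B k ω ∂μ = 1 := by
    simp_rw [hsumB]
    simp
  rw [this, mul_one]
end

section
/- Suppose x is a random vector in R^n satisfying: (i) there is c > 0 with E[|uᵀx|^r]^{1/r} ≤ c ‖uᵀx‖_{Ψ₂} √r for all unit vectors u and r ≥ 1, and (ii) there is c₀ > 0 with c₀ ‖uᵀx‖_{Ψ₂}² ≤ E[(uᵀx)²] for all u. Then for each coordinate i, ‖E[x_i² x xᵀ]‖ ≤ (4c²/c₀)² Σ_{ii} ‖Σ‖, where Σ = E[x xᵀ] and ‖·‖ is the operator norm. -/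
open MeasureTheory Matrix
open scoped Matrix.Norms.L2Operator

lemma abs_prod4_le (a b d e : ℝ) : |a * b * (d * e)| ≤ (a^4 + b^4 + d^4 + e^4) / 2 := by
  have h1 : |a * b * (d * e)| = |a| * |b| * (|d| * |e|) := by
    rw [abs_mul, abs_mul, abs_mul]
  rw [h1]
  nlinarith [sq_abs a, sq_abs b, sq_abs d, sq_abs e, abs_nonneg a, abs_nonneg b,
    abs_nonneg d, abs_nonneg e, sq_nonneg (|a| * |b| - |d| * |e|), sq_nonneg (|a| - |b|),
    sq_nonneg (|d| - |e|), sq_nonneg (|a| * |b| + |d| * |e|), sq_nonneg (|a|^2 - |b|^2),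
    sq_nonneg (|d|^2 - |e|^2), mul_nonneg (abs_nonneg a) (abs_nonneg b),
    mul_nonneg (abs_nonneg d) (abs_nonneg e)]

lemma abs_prod2_le (a b : ℝ) : |a * b| ≤ (a^4 + b^4 + 2) / 2 := by
  rw [abs_mul]
  nlinarith [sq_abs a, sq_abs b, abs_nonneg a, abs_nonneg b, sq_nonneg (|a| - |b|),
    sq_nonneg (|a| * |b| - 1), sq_nonneg (|a|^2 - |b|^2), mul_nonneg (abs_nonneg a) (abs_nonneg b)]

lemma abs_integral_mul_le_sqrt {Ω : Type*} [MeasureSpace Ω] (μ : Measure Ω)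
    (f g : Ω → ℝ) (hf : AEStronglyMeasurable f μ) (hg : AEStronglyMeasurable g μ)
    (hf2 : Integrable (fun ω => f ω ^ 2) μ) (hg2 : Integrable (fun ω => g ω ^ 2) μ) :
    |∫ ω, f ω * g ω ∂μ| ≤ Real.sqrt (∫ ω, f ω ^ 2 ∂μ) * Real.sqrt (∫ ω, g ω ^ 2 ∂μ) := by
  have hmf : MemLp f 2 μ := (memLp_two_iff_integrable_sq hf).mpr hf2
  have hmg : MemLp g 2 μ := (memLp_two_iff_integrable_sq hg).mpr hg2
  have h2 : ENNReal.ofReal (2:ℝ) = 2 := by norm_num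
  have hpq : Real.HolderConjugate 2 2 := Real.HolderConjugate.two_two
  have H := MeasureTheory.integral_mul_norm_le_Lp_mul_Lq (f := f) (g := g) (μ := μ) hpq
    (h2 ▸ hmf) (h2 ▸ hmg)
  have e1 : ∀ h : Ω → ℝ, (∫ ω, ‖h ω‖ ^ (2:ℝ) ∂μ) = ∫ ω, h ω ^ 2 ∂μ := by
    intro h
    refine integral_congr_ae (Filter.Eventually.of_forall fun ω => ?_)
    show ‖h ω‖ ^ (2:ℝ) = h ω ^ 2
    rw [show (2:ℝ) = ((2:ℕ):ℝ) by norm_num, Real.rpow_natCast, Real.norm_eq_abs, sq_abs]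
  have e2 : ∀ t : ℝ, t ^ (1/(2:ℝ)) = Real.sqrt t := fun t => (Real.sqrt_eq_rpow t).symm
  calc |∫ ω, f ω * g ω ∂μ| = ‖∫ ω, f ω * g ω ∂μ‖ := (Real.norm_eq_abs _).symm
    _ ≤ ∫ ω, ‖f ω * g ω‖ ∂μ := norm_integral_le_integral_norm _
    _ = ∫ ω, ‖f ω‖ * ‖g ω‖ ∂μ := by
        refine integral_congr_ae (Filter.Eventually.of_forall fun ω => ?_)
        simp [norm_mul]
    _ ≤ (∫ ω, ‖f ω‖ ^ (2:ℝ) ∂μ) ^ (1/(2:ℝ)) * (∫ ω, ‖g ω‖ ^ (2:ℝ) ∂μ) ^ (1/(2:ℝ)) := H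
    _ = Real.sqrt (∫ ω, f ω ^ 2 ∂μ) * Real.sqrt (∫ ω, g ω ^ 2 ∂μ) := by
        rw [e1 f, e1 g, e2, e2]

lemma integrable_sum_mul' {Ω : Type*} [MeasureSpace Ω] (μ : Measure Ω) {ι κ : Type*}
    [Fintype ι] [Fintype κ] (f : ι → Ω → ℝ) (g : κ → Ω → ℝ)
    (h : ∀ a b, Integrable (fun ω => f a ω * g b ω) μ) :
    Integrable (fun ω => (∑ a, f a ω) * (∑ b, g b ω)) μ := by
  have e : (fun ω => (∑ a, f a ω) * (∑ b, g b ω))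
      = fun ω => ∑ a, ∑ b, f a ω * g b ω := funext fun ω => by rw [Finset.sum_mul_sum]
  rw [e]
  exact integrable_finset_sum _ fun a _ => integrable_finset_sum _ fun b _ => h a b

/-- The sub-Gaussian `Ψ₂` norm: `inf {u > 0 : E[exp(z²/u²)] ≤ 2}`. -/
noncomputable def psi2Norm {Ω : Type*} [MeasureSpace Ω] (μ : Measure Ω) (z : Ω → ℝ) : ℝ :=
  sInf {u : ℝ | 0 < u ∧ ∫ ω, Real.exp (z ω ^ 2 / u ^ 2) ∂μ ≤ 2}

/-- If (i) `E[|uᵀx|^r]^{1/r} ≤ c ‖uᵀx‖_{Ψ₂} √r` for all unit `u` and `r ≥ 1`,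
and (ii) `c₀ ‖uᵀx‖_{Ψ₂}² ≤ E[(uᵀx)²]` for all `u`, then for every coordinate `i`,
`‖E[xᵢ² x xᵀ]‖ ≤ (4c²/c₀)² Σᵢᵢ ‖Σ‖` in operator norm, where `Σ = E[x xᵀ]`. -/
theorem fourth_moment_matrix_opNorm_bound {Ω : Type*} [MeasureSpace Ω]
    (μ : Measure Ω) [IsProbabilityMeasure μ] {n : ℕ}
    (x : Ω → Fin n → ℝ) (hxm : Measurable x)
    (c c₀ : ℝ) (hc : 0 < c) (hc₀ : 0 < c₀)
    (hmom : ∀ u : Fin n → ℝ, (∑ i, u i ^ 2 = 1) → ∀ r : ℝ, 1 ≤ r →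
      (∫ ω, |∑ i, u i * x ω i| ^ r ∂μ) ^ (1 / r)
        ≤ c * psi2Norm μ (fun ω => ∑ i, u i * x ω i) * Real.sqrt r)
    (hlow : ∀ u : Fin n → ℝ,
      c₀ * psi2Norm μ (fun ω => ∑ i, u i * x ω i) ^ 2
        ≤ ∫ ω, (∑ i, u i * x ω i) ^ 2 ∂μ)
    (S : Matrix (Fin n) (Fin n) ℝ)
    (hS : ∀ i j, S i j = ∫ ω, x ω i * x ω j ∂μ)
    (hint4 : ∀ i j l, Integrable (fun ω => x ω i ^ 2 * (x ω j * x ω l)) μ)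
    (i : Fin n)
    (M : Matrix (Fin n) (Fin n) ℝ)
    (hM : ∀ j l, M j l = ∫ ω, x ω i ^ 2 * (x ω j * x ω l) ∂μ) :
    ‖M‖ ≤ (4 * c ^ 2 / c₀) ^ 2 * S i i * ‖S‖ := by
  classical
  set K : ℝ := 4 * c ^ 2 / c₀ with hK
  have hK0 : 0 < K := by positivity
  set p : (Fin n → ℝ) → Ω → ℝ := fun u ω => ∑ j, u j * x ω j with hp
  have hm : ∀ j, Measurable fun ω => x ω j := fun j => (measurable_pi_apply j).comp hxm
  have hmp : ∀ u, Measurable (p u) := fun u =>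
    Finset.measurable_sum _ fun j _ => (hm j).const_mul (u j)
  -- basic integrability
  have hx4 : ∀ j, Integrable (fun ω => x ω j ^ 4) μ := fun j =>
    (hint4 j j j).congr (Filter.Eventually.of_forall fun ω => by ring)
  have hconst : Integrable (fun _ : Ω => (2:ℝ)) μ := integrable_const _
  have hxx : ∀ j l, Integrable (fun ω => x ω j * x ω l) μ := by
    intro j l
    refine Integrable.mono (g := fun ω => (x ω j ^ 4 + x ω l ^ 4 + 2)/2) ?_ ?_ ?_
    · exact (((hx4 j).add (hx4 l)).add hconst).div_const 2
    · exact ((hm j).mul (hm l)).aestronglyMeasurable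
    · refine Filter.Eventually.of_forall fun ω => ?_
      rw [Real.norm_eq_abs, Real.norm_eq_abs]
      exact (abs_prod2_le _ _).trans (le_abs_self _)
  have h4m : ∀ a b j l, Integrable (fun ω => x ω a * x ω b * (x ω j * x ω l)) μ := by
    intro a b j l
    refine Integrable.mono
      (g := fun ω => (x ω a ^ 4 + x ω b ^ 4 + x ω j ^ 4 + x ω l ^ 4)/2) ?_ ?_ ?_
    · exact ((((hx4 a).add (hx4 b)).add (hx4 j)).add (hx4 l)).div_const 2
    · exact (((hm a).mul (hm b)).mul ((hm j).mul (hm l))).aestronglyMeasurable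
    · refine Filter.Eventually.of_forall fun ω => ?_
      rw [Real.norm_eq_abs, Real.norm_eq_abs]
      exact (abs_prod4_le _ _ _ _).trans (le_abs_self _)
  -- expansion identities
  have hexp : ∀ (u v : Fin n → ℝ) ω,
      p u ω * p v ω = ∑ j, ∑ l, (u j * v l) * (x ω j * x ω l) := by
    intro u v ω
    rw [hp]
    rw [Finset.sum_mul_sum]
    exact Finset.sum_congr rfl fun j _ => Finset.sum_congr rfl fun l _ => by ring
  have hexp2 : ∀ (u v : Fin n → ℝ) ω,
      x ω i ^ 2 * (p u ω * p v ω)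
        = ∑ j, ∑ l, (u j * v l) * (x ω i ^ 2 * (x ω j * x ω l)) := by
    intro u v ω
    rw [hexp u v ω, Finset.mul_sum]
    refine Finset.sum_congr rfl fun j _ => ?_
    rw [Finset.mul_sum]
    exact Finset.sum_congr rfl fun l _ => by ring
  have hint_pp : ∀ u v, Integrable (fun ω => p u ω * p v ω) μ := by
    intro u v
    have e : (fun ω => p u ω * p v ω)
        = fun ω => ∑ j, ∑ l, (u j * v l) * (x ω j * x ω l) := funext fun ω => hexp u v ω
    rw [e]
    exact integrable_finset_sum _ fun j _ =>
      integrable_finset_sum _ fun l _ => (hxx j l).const_mul _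
  have hInt_pp : ∀ u v, ∫ ω, p u ω * p v ω ∂μ = ∑ j, ∑ l, (u j * v l) * S j l := by
    intro u v
    have e : (fun ω => p u ω * p v ω)
        = fun ω => ∑ j, ∑ l, (u j * v l) * (x ω j * x ω l) := funext fun ω => hexp u v ω
    rw [e, integral_finset_sum _ (fun j _ =>
      integrable_finset_sum _ fun l _ => (hxx j l).const_mul _)]
    refine Finset.sum_congr rfl fun j _ => ?_
    rw [integral_finset_sum _ fun l _ => (hxx j l).const_mul _]
    refine Finset.sum_congr rfl fun l _ => ?_
    rw [integral_const_mul, hS j l]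
  have hint_x2pp : ∀ u v, Integrable (fun ω => x ω i ^ 2 * (p u ω * p v ω)) μ := by
    intro u v
    have e : (fun ω => x ω i ^ 2 * (p u ω * p v ω))
        = fun ω => ∑ j, ∑ l, (u j * v l) * (x ω i ^ 2 * (x ω j * x ω l)) :=
      funext fun ω => hexp2 u v ω
    rw [e]
    exact integrable_finset_sum _ fun j _ =>
      integrable_finset_sum _ fun l _ => (hint4 i j l).const_mul _
  have hInt_x2pp : ∀ u v, ∫ ω, x ω i ^ 2 * (p u ω * p v ω) ∂μ
      = ∑ j, ∑ l, (u j * v l) * M j l := by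
    intro u v
    have e : (fun ω => x ω i ^ 2 * (p u ω * p v ω))
        = fun ω => ∑ j, ∑ l, (u j * v l) * (x ω i ^ 2 * (x ω j * x ω l)) :=
      funext fun ω => hexp2 u v ω
    rw [e, integral_finset_sum _ (fun j _ =>
      integrable_finset_sum _ fun l _ => (hint4 i j l).const_mul _)]
    refine Finset.sum_congr rfl fun j _ => ?_
    rw [integral_finset_sum _ fun l _ => (hint4 i j l).const_mul _]
    refine Finset.sum_congr rfl fun l _ => ?_
    rw [integral_const_mul, hM j l]
  -- quadratic forms
  set Q : (Fin n → ℝ) → ℝ := fun u => ∫ ω, p u ω ^ 2 ∂μ with hQdef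
  have hQpp : ∀ u, Q u = ∫ ω, p u ω * p u ω ∂μ := fun u =>
    integral_congr_ae (Filter.Eventually.of_forall fun ω => pow_two (p u ω))
  have hQ0 : ∀ u, 0 ≤ Q u := fun u => integral_nonneg fun ω => sq_nonneg _
  have hSii : S i i = ∫ ω, x ω i ^ 2 ∂μ := by
    rw [hS i i]
    exact integral_congr_ae (Filter.Eventually.of_forall fun ω => (sq (x ω i)).symm)
  have hSii0 : 0 ≤ S i i := by
    rw [hSii]; exact integral_nonneg fun ω => sq_nonneg _
  -- mulVec identities
  have hmv : ∀ (A : Matrix (Fin n) (Fin n) ℝ) (u : Fin n → ℝ) (j),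
      (A *ᵥ u) j = ∑ l, A j l * u l := fun A u j => rfl
  have hbilM : ∀ v u : Fin n → ℝ,
      ∑ j, v j * (M *ᵥ u) j = ∫ ω, x ω i ^ 2 * (p v ω * p u ω) ∂μ := by
    intro v u
    rw [hInt_x2pp v u]
    refine Finset.sum_congr rfl fun j _ => ?_
    rw [hmv M u j, Finset.mul_sum]
    exact Finset.sum_congr rfl fun l _ => by ring
  -- Q u ≤ ‖S‖ for unit u
  have hQle : ∀ u : Fin n → ℝ, (∑ j, u j ^ 2 = 1) → Q u ≤ ‖S‖ := by
    intro u hu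
    have hq1 : Q u = ∑ j, u j * (S *ᵥ u) j := by
      rw [hQpp u, hInt_pp u u]
      refine (Finset.sum_congr rfl fun j _ => ?_).symm
      rw [hmv S u j, Finset.mul_sum]
      exact Finset.sum_congr rfl fun l _ => by ring
    have hcs := Real.sum_mul_le_sqrt_mul_sqrt Finset.univ u (fun j => (S *ᵥ u) j)
    have hn1 : Real.sqrt (∑ j, u j ^ 2) = 1 := by rw [hu, Real.sqrt_one]
    have hop : Real.sqrt (∑ j, (S *ᵥ u) j ^ 2) ≤ ‖S‖ := by
      have h2 := Matrix.l2_opNorm_mulVec S ((WithLp.equiv 2 (Fin n → ℝ)).symm u)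
      have e1 : ‖(EuclideanSpace.equiv (Fin n) ℝ).symm
          (S *ᵥ ((WithLp.equiv 2 (Fin n → ℝ)).symm u))‖
          = Real.sqrt (∑ j, (S *ᵥ u) j ^ 2) := by
        rw [EuclideanSpace.norm_eq]
        simp only [Real.norm_eq_abs, sq_abs]
        rfl
      have e2 : ‖(WithLp.equiv 2 (Fin n → ℝ)).symm u‖ = Real.sqrt (∑ j, u j ^ 2) := by
        rw [EuclideanSpace.norm_eq]
        simp [Real.norm_eq_abs, sq_abs]
      rw [e1, e2, hn1, mul_one] at h2
      exact h2
    calc Q u = ∑ j, u j * (S *ᵥ u) j := hq1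
      _ ≤ Real.sqrt (∑ j, u j ^ 2) * Real.sqrt (∑ j, (S *ᵥ u) j ^ 2) := hcs
      _ = Real.sqrt (∑ j, (S *ᵥ u) j ^ 2) := by rw [hn1, one_mul]
      _ ≤ ‖S‖ := hop
  -- integrability of p u ^ 4
  have hsqsum : ∀ (u : Fin n → ℝ) ω, p u ω ^ 2
      = ∑ a : Fin n × Fin n, (u a.1 * u a.2) * (x ω a.1 * x ω a.2) := by
    intro u ω
    rw [sq, hp]
    rw [Finset.sum_mul_sum, Fintype.sum_prod_type]
    exact Finset.sum_congr rfl fun j _ => Finset.sum_congr rfl fun l _ => by ring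
  have hint_p4 : ∀ u, Integrable (fun ω => p u ω ^ 4) μ := by
    intro u
    have e : (fun ω => p u ω ^ 4)
        = fun ω => (∑ a : Fin n × Fin n, (u a.1 * u a.2) * (x ω a.1 * x ω a.2))
          * (∑ b : Fin n × Fin n, (u b.1 * u b.2) * (x ω b.1 * x ω b.2)) := by
      funext ω
      rw [← hsqsum u ω]; ring
    rw [e]
    refine integrable_sum_mul' μ _ _ fun a b => ?_
    exact ((h4m a.1 a.2 b.1 b.2).const_mul (u a.1 * u a.2 * (u b.1 * u b.2))).congr
      (Filter.Eventually.of_forall fun ω => by ring)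
  -- fourth moment bound for unit vectors
  have hψ0 : ∀ u : Fin n → ℝ, 0 ≤ psi2Norm μ (fun ω => ∑ j, u j * x ω j) :=
    fun u => Real.sInf_nonneg fun y hy => hy.1.le
  have hF : ∀ u : Fin n → ℝ, (∑ j, u j ^ 2 = 1) →
      (∫ ω, p u ω ^ 4 ∂μ) ≤ (K * Q u) ^ 2 := by
    intro u hu
    have h4 := hmom u hu 4 (by norm_num)
    have habs : (∫ ω, |∑ j, u j * x ω j| ^ (4:ℝ) ∂μ) = ∫ ω, p u ω ^ 4 ∂μ := by
      refine integral_congr_ae (Filter.Eventually.of_forall fun ω => ?_)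
      show |p u ω| ^ (4:ℝ) = p u ω ^ 4
      rw [show (4:ℝ) = ((4:ℕ):ℝ) by norm_num, Real.rpow_natCast, pow_abs,
        abs_of_nonneg (by positivity)]
    rw [habs] at h4
    have h40 : 0 ≤ ∫ ω, p u ω ^ 4 ∂μ := integral_nonneg fun ω => by positivity
    have hsqrt4 : Real.sqrt 4 = 2 := by
      rw [show (4:ℝ) = 2^2 by norm_num, Real.sqrt_sq (by norm_num : (0:ℝ) ≤ 2)]
    rw [hsqrt4] at h4
    set ψ := psi2Norm μ (fun ω => ∑ j, u j * x ω j) with hψ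
    have hψn := hψ0 u
    have hψQ : ψ ^ 2 ≤ Q u / c₀ := by
      rw [le_div_iff₀ hc₀]
      have := hlow u
      calc ψ ^ 2 * c₀ = c₀ * ψ ^ 2 := by ring
        _ ≤ ∫ ω, (∑ j, u j * x ω j) ^ 2 ∂μ := hlow u
        _ = Q u := rfl
    have hle : (∫ ω, p u ω ^ 4 ∂μ) ≤ (c * ψ * 2) ^ 4 := by
      calc (∫ ω, p u ω ^ 4 ∂μ)
          = ((∫ ω, p u ω ^ 4 ∂μ) ^ (1/(4:ℝ))) ^ (4:ℕ) := by
            rw [← Real.rpow_natCast ((∫ ω, p u ω ^ 4 ∂μ) ^ (1/(4:ℝ))) 4,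
              ← Real.rpow_mul h40]
            norm_num
        _ ≤ (c * ψ * 2) ^ (4:ℕ) :=
            pow_le_pow_left₀ (Real.rpow_nonneg h40 _) h4 4
    calc (∫ ω, p u ω ^ 4 ∂μ) ≤ (c * ψ * 2) ^ 4 := hle
      _ = 16 * c ^ 4 * (ψ ^ 2) ^ 2 := by ring
      _ ≤ 16 * c ^ 4 * (Q u / c₀) ^ 2 := by
          have h1 := pow_le_pow_left₀ (sq_nonneg ψ) hψQ 2
          have h2 : (0:ℝ) ≤ 16 * c ^ 4 := by positivity
          exact mul_le_mul_of_nonneg_left h1 h2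
      _ = (K * Q u) ^ 2 := by
          rw [hK]; field_simp; ring
  have hsqF : ∀ u : Fin n → ℝ, (∑ j, u j ^ 2 = 1) →
      Real.sqrt (∫ ω, p u ω ^ 4 ∂μ) ≤ K * Q u := by
    intro u hu
    have h := Real.sqrt_le_sqrt (hF u hu)
    rwa [Real.sqrt_sq (mul_nonneg hK0.le (hQ0 u))] at h
  -- the coordinate vector
  set e : Fin n → ℝ := fun j => if j = i then (1:ℝ) else 0 with he
  have he1 : ∑ j, e j ^ 2 = 1 := by
    have : ∀ j, e j ^ 2 = e j := fun j => by
      by_cases h : j = i <;> simp [he, h]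
    rw [Finset.sum_congr rfl fun j _ => this j]
    simp [he]
  have hpe : ∀ ω, p e ω = x ω i := by
    intro ω
    rw [hp]
    simp [he, ite_mul]
  have hQe : Q e = S i i := by
    rw [hSii]
    exact integral_congr_ae (Filter.Eventually.of_forall fun ω => by simp only [hpe])
  have hsq_i : Real.sqrt (∫ ω, x ω i ^ 4 ∂μ) ≤ K * S i i := by
    have h := hsqF e he1
    rw [hQe] at h
    have e4 : ∫ ω, p e ω ^ 4 ∂μ = ∫ ω, x ω i ^ 4 ∂μ :=
      integral_congr_ae (Filter.Eventually.of_forall fun ω => by simp only [hpe])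
    rwa [e4] at h
  -- constants
  set C : ℝ := K ^ 2 * S i i * ‖S‖ with hC
  have hC0 : 0 ≤ C := mul_nonneg (mul_nonneg (sq_nonneg K) hSii0) (norm_nonneg S)
  -- QM
  set QM : (Fin n → ℝ) → ℝ := fun u => ∫ ω, x ω i ^ 2 * p u ω ^ 2 ∂μ with hQM
  have hQM0 : ∀ u, 0 ≤ QM u := fun u => integral_nonneg fun ω => by positivity
  have hx4i : Integrable (fun ω => (x ω i ^ 2) ^ 2) μ :=
    (hx4 i).congr (Filter.Eventually.of_forall fun ω => by ring)
  have hQMunit : ∀ u : Fin n → ℝ, (∑ j, u j ^ 2 = 1) → QM u ≤ C := by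
    intro u hu
    have hg2 : Integrable (fun ω => (p u ω ^ 2) ^ 2) μ :=
      (hint_p4 u).congr (Filter.Eventually.of_forall fun ω => by ring)
    have hcs := abs_integral_mul_le_sqrt μ (fun ω => x ω i ^ 2) (fun ω => p u ω ^ 2)
      ((hm i).pow_const 2).aestronglyMeasurable ((hmp u).pow_const 2).aestronglyMeasurable
      hx4i hg2
    have e1 : ∫ ω, (x ω i ^ 2) ^ 2 ∂μ = ∫ ω, x ω i ^ 4 ∂μ :=
      integral_congr_ae (Filter.Eventually.of_forall fun ω => by ring)
    have e2 : ∫ ω, (p u ω ^ 2) ^ 2 ∂μ = ∫ ω, p u ω ^ 4 ∂μ :=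
      integral_congr_ae (Filter.Eventually.of_forall fun ω => by ring)
    rw [e1, e2] at hcs
    calc QM u ≤ |∫ ω, x ω i ^ 2 * p u ω ^ 2 ∂μ| := le_abs_self _
      _ ≤ Real.sqrt (∫ ω, x ω i ^ 4 ∂μ) * Real.sqrt (∫ ω, p u ω ^ 4 ∂μ) := hcs
      _ ≤ (K * S i i) * (K * Q u) :=
          mul_le_mul hsq_i (hsqF u hu) (Real.sqrt_nonneg _)
            (mul_nonneg hK0.le hSii0)
      _ ≤ (K * S i i) * (K * ‖S‖) := by
          have := mul_le_mul_of_nonneg_left (hQle u hu) hK0.le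
          exact mul_le_mul_of_nonneg_left this (mul_nonneg hK0.le hSii0)
      _ = C := by rw [hC]; ring
  -- homogeneity
  have hQMall : ∀ w : Fin n → ℝ, QM w ≤ C * (∑ j, w j ^ 2) := by
    intro w
    by_cases hw : ∑ j, w j ^ 2 = 0
    · have hw0 : ∀ j, w j = 0 := by
        intro j
        have h := (Finset.sum_eq_zero_iff_of_nonneg
          (fun j _ => sq_nonneg (w j))).mp hw j (Finset.mem_univ j)
        exact sq_eq_zero_iff.mp h
      have hpz : ∀ ω, p w ω = 0 := fun ω =>
        Finset.sum_eq_zero fun j _ => by rw [hw0 j]; ring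
      have hz : QM w = 0 := by
        calc QM w = ∫ _ω, (0:ℝ) ∂μ :=
              integral_congr_ae (Filter.Eventually.of_forall fun ω => by
                simp only [hpz]; ring)
          _ = 0 := by simp
      rw [hz, hw, mul_zero]
    · have hpos : 0 < ∑ j, w j ^ 2 :=
        lt_of_le_of_ne (Finset.sum_nonneg fun j _ => sq_nonneg _) (Ne.symm hw)
      set t := Real.sqrt (∑ j, w j ^ 2) with ht
      have ht0 : 0 < t := Real.sqrt_pos.mpr hpos
      have ht2 : t ^ 2 = ∑ j, w j ^ 2 := Real.sq_sqrt hpos.le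
      set u : Fin n → ℝ := fun j => w j / t with hudef
      have hu1 : ∑ j, u j ^ 2 = 1 := by
        have e : ∑ j, u j ^ 2 = (∑ j, w j ^ 2) / t ^ 2 := by
          rw [Finset.sum_div]
          exact Finset.sum_congr rfl fun j _ => by rw [hudef, div_pow]
        rw [e, ← ht2, div_self (pow_ne_zero 2 ht0.ne')]
      have hpw : ∀ ω, p w ω = t * p u ω := by
        intro ω
        simp only [hp]
        rw [Finset.mul_sum]
        refine Finset.sum_congr rfl fun j _ => ?_
        rw [hudef]
        field_simp
      have hQMw : QM w = t ^ 2 * QM u := by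
        calc QM w
            = ∫ ω, t ^ 2 * (x ω i ^ 2 * p u ω ^ 2) ∂μ :=
              integral_congr_ae (Filter.Eventually.of_forall fun ω => by
                simp only [hpw]; ring)
          _ = t ^ 2 * ∫ ω, x ω i ^ 2 * p u ω ^ 2 ∂μ := integral_const_mul _ _
      calc QM w = t ^ 2 * QM u := hQMw
        _ ≤ t ^ 2 * C := mul_le_mul_of_nonneg_left (hQMunit u hu1) (sq_nonneg t)
        _ = C * (∑ j, w j ^ 2) := by rw [← ht2]; ring
  -- bilinear bound
  have hbilbound : ∀ v u : Fin n → ℝ,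
      (∫ ω, x ω i ^ 2 * (p v ω * p u ω) ∂μ)
        ≤ C * (Real.sqrt (∑ j, v j ^ 2) * Real.sqrt (∑ j, u j ^ 2)) := by
    intro v u
    have hfm : ∀ w : Fin n → ℝ, AEStronglyMeasurable (fun ω => x ω i * p w ω) μ :=
      fun w => ((hm i).mul (hmp w)).aestronglyMeasurable
    have hfint : ∀ w : Fin n → ℝ, Integrable (fun ω => (x ω i * p w ω) ^ 2) μ :=
      fun w => (hint_x2pp w w).congr (Filter.Eventually.of_forall fun ω => by ring)
    have hcs := abs_integral_mul_le_sqrt μ (fun ω => x ω i * p v ω)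
      (fun ω => x ω i * p u ω) (hfm v) (hfm u) (hfint v) (hfint u)
    have e0 : ∫ ω, (x ω i * p v ω) * (x ω i * p u ω) ∂μ
        = ∫ ω, x ω i ^ 2 * (p v ω * p u ω) ∂μ :=
      integral_congr_ae (Filter.Eventually.of_forall fun ω => by ring)
    have e1 : ∀ w : Fin n → ℝ, ∫ ω, (x ω i * p w ω) ^ 2 ∂μ = QM w := fun w =>
      integral_congr_ae (Filter.Eventually.of_forall fun ω => by ring)
    rw [e0, e1 v, e1 u] at hcs
    calc (∫ ω, x ω i ^ 2 * (p v ω * p u ω) ∂μ)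
        ≤ |∫ ω, x ω i ^ 2 * (p v ω * p u ω) ∂μ| := le_abs_self _
      _ ≤ Real.sqrt (QM v) * Real.sqrt (QM u) := hcs
      _ ≤ Real.sqrt (C * ∑ j, v j ^ 2) * Real.sqrt (C * ∑ j, u j ^ 2) :=
          mul_le_mul (Real.sqrt_le_sqrt (hQMall v)) (Real.sqrt_le_sqrt (hQMall u))
            (Real.sqrt_nonneg _) (Real.sqrt_nonneg _)
      _ = (Real.sqrt C * Real.sqrt C)
            * (Real.sqrt (∑ j, v j ^ 2) * Real.sqrt (∑ j, u j ^ 2)) := by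
          rw [Real.sqrt_mul hC0, Real.sqrt_mul hC0]; ring
      _ = C * (Real.sqrt (∑ j, v j ^ 2) * Real.sqrt (∑ j, u j ^ 2)) := by
          rw [Real.mul_self_sqrt hC0]
  -- final operator norm bound
  rw [Matrix.l2_opNorm_def]
  refine ContinuousLinearMap.opNorm_le_bound _ hC0 fun w => ?_
  set w' : Fin n → ℝ := WithLp.equiv 2 (Fin n → ℝ) w with hw'
  have happ : (Matrix.toEuclideanLin.trans LinearMap.toContinuousLinearMap) M w
      = (WithLp.equiv 2 (Fin n → ℝ)).symm (M *ᵥ w') := by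
    rw [LinearEquiv.trans_apply]
    exact Matrix.toEuclideanLin_apply M w
  rw [happ]
  have hnw : ‖w‖ = Real.sqrt (∑ j, w' j ^ 2) := by
    rw [EuclideanSpace.norm_eq]
    simp [Real.norm_eq_abs, sq_abs, hw']
  have hny : ‖(WithLp.equiv 2 (Fin n → ℝ)).symm (M *ᵥ w')‖
      = Real.sqrt (∑ j, (M *ᵥ w') j ^ 2) := by
    rw [EuclideanSpace.norm_eq]
    simp [Real.norm_eq_abs, sq_abs]
  rw [hny, hnw]
  set y : Fin n → ℝ := M *ᵥ w' with hy
  have hyy : ∑ j, y j ^ 2 = ∫ ω, x ω i ^ 2 * (p y ω * p w' ω) ∂μ := by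
    rw [← hbilM y w']
    exact Finset.sum_congr rfl fun j _ => pow_two _
  have hbnd : ∑ j, y j ^ 2
      ≤ C * (Real.sqrt (∑ j, y j ^ 2) * Real.sqrt (∑ j, w' j ^ 2)) := by
    have h := hbilbound y w'
    rwa [← hyy] at h
  set a := Real.sqrt (∑ j, y j ^ 2) with ha
  set b := Real.sqrt (∑ j, w' j ^ 2) with hb
  have ha2 : a ^ 2 = ∑ j, y j ^ 2 :=
    Real.sq_sqrt (Finset.sum_nonneg fun j _ => sq_nonneg _)
  have ha0 : 0 ≤ a := Real.sqrt_nonneg _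
  have hb0 : 0 ≤ b := Real.sqrt_nonneg _
  rcases eq_or_lt_of_le ha0 with h0 | hpos
  · rw [← h0]
    exact mul_nonneg hC0 hb0
  · have key : a ^ 2 ≤ C * (a * b) := by rw [ha2]; exact hbnd
    have : a * a ≤ (C * b) * a := by nlinarith
    exact le_of_mul_le_mul_right this hpos
end

section
/- In the MCAR model with known P and stochastically dependent i.i.d. samples, the entrywise mean squared error of the estimator Σ̂_{ij} = (1/(N p_{ij})) Σ_k δᵢ^(k)δⱼ^(k) xᵢ^(k)xⱼ^(k) equals E[|Σ̂_{ij} − Σ_{ij}|²] = (Var(xᵢxⱼ) + (1 − p_{ij}) Σ_{ij}²)/(p_{ij} N). -/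
open MeasureTheory ProbabilityTheory

/-- In the MCAR model with known observation probability `p = p_{ij} > 0`,
writing `f k = xᵢ⁽ᵏ⁾xⱼ⁽ᵏ⁾` (i.i.d. with mean `s = Σ_{ij}` and variance `V`) and
`d k = δᵢ⁽ᵏ⁾δⱼ⁽ᵏ⁾` (Bernoulli(p), all 2N variables jointly independent),
the entrywise mean squared error of `Σ̂_{ij} = (1/(N p)) ∑ₖ d k · f k` equals
`(V + (1 − p) s²)/(p N)`. -/
theorem mcar_entrywise_mse {Ω : Type*} [MeasureSpace Ω]
    (μ : Measure Ω) [IsProbabilityMeasure μ] {N : ℕ} (hN : 0 < N)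
    (f d : Fin N → Ω → ℝ) (s V p : ℝ) (hp : 0 < p)
    -- joint independence of all the data products and all the Bernoulli variables
    (hindep : iIndepFun
      (fun k : Fin N ⊕ Fin N => Sum.elim f d k) μ)
    (hfm : ∀ k, Measurable (f k)) (hdm : ∀ k, Measurable (d k))
    (hd01 : ∀ k ω, d k ω = 0 ∨ d k ω = 1)
    (hdp : ∀ k, ∫ ω, d k ω ∂μ = p)
    (hfmean : ∀ k, ∫ ω, f k ω ∂μ = s)
    (hfsq : ∀ k, ∫ ω, f k ω ^ 2 ∂μ = V + s ^ 2)
    (hfint : ∀ k, Integrable (fun ω => f k ω ^ 2) μ) :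
    ∫ ω, ((1 / (N * p)) * ∑ k, d k ω * f k ω - s) ^ 2 ∂μ
      = (V + (1 - p) * s ^ 2) / (p * N) := by
  set X : Fin N ⊕ Fin N → Ω → ℝ := fun k => Sum.elim f d k with hX
  have hXm : ∀ i, Measurable (X i) := by
    rintro (k | k)
    · exact hfm k
    · exact hdm k
  set g : Fin N → Ω → ℝ := fun k ω => d k ω * f k ω with hg
  -- basic integrability
  have hf_int : ∀ k, Integrable (f k) μ := by
    intro k
    refine ((integrable_const (1 : ℝ)).add (hfint k)).mono'
      (hfm k).aestronglyMeasurable (ae_of_all _ fun ω => ?_)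
    simp only [Pi.add_apply, Real.norm_eq_abs]
    nlinarith [sq_nonneg (|f k ω| - 1), sq_abs (f k ω), abs_nonneg (f k ω)]
  have hdabs : ∀ k ω, |d k ω| ≤ 1 := by
    intro k ω; rcases hd01 k ω with h | h <;> simp [h]
  have hg_int : ∀ k, Integrable (g k) μ := by
    intro k
    refine (hf_int k).abs.mono' ((hdm k).mul (hfm k)).aestronglyMeasurable
      (ae_of_all _ fun ω => ?_)
    simp only [Real.norm_eq_abs, hg, abs_mul]
    calc |d k ω| * |f k ω| ≤ 1 * |f k ω| :=
          mul_le_mul_of_nonneg_right (hdabs k ω) (abs_nonneg _)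
      _ = |f k ω| := one_mul _
  have hgg_int : ∀ k l, Integrable (fun ω => g k ω * g l ω) μ := by
    intro k l
    by_cases hkl : k = l
    · subst hkl
      refine (hfint k).mono'
        (((hdm k).mul (hfm k)).mul ((hdm k).mul (hfm k))).aestronglyMeasurable
        (ae_of_all _ fun ω => ?_)
      simp only [Real.norm_eq_abs, hg, abs_mul]
      have h1 := hdabs k ω
      have h2 := abs_nonneg (f k ω)
      have h3 := abs_nonneg (d k ω)
      nlinarith [sq_abs (f k ω), mul_le_mul h1 h1 h3 zero_le_one]
    · have hind : IndepFun (g k) (g l) μ := by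
        exact hindep.indepFun_mul_mul hXm (Sum.inr k) (Sum.inl k) (Sum.inr l) (Sum.inl l)
          (by simpa using hkl) (by simp) (by simp) (by simpa using hkl)
      exact hind.integrable_mul (hg_int k) (hg_int l)
  -- means
  have hdf_indep : ∀ k, IndepFun (d k) (f k) μ := by
    intro k
    have := hindep.indepFun (i := Sum.inr k) (j := Sum.inl k) (by simp)
    exact this
  have hEg : ∀ k, ∫ ω, g k ω ∂μ = p * s := by
    intro k
    have := (hdf_indep k).integral_fun_mul_eq_mul_integral (hdm k).aestronglyMeasurable (hfm k).aestronglyMeasurable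
    simpa [hg, hdp k, hfmean k] using this
  have hEgg_ne : ∀ k l, k ≠ l → ∫ ω, g k ω * g l ω ∂μ = (p * s) * (p * s) := by
    intro k l hkl
    have hind : IndepFun (g k) (g l) μ := by
      exact hindep.indepFun_mul_mul hXm (Sum.inr k) (Sum.inl k) (Sum.inr l) (Sum.inl l)
        (by simpa using hkl) (by simp) (by simp) (by simpa using hkl)
    have := hind.integral_fun_mul_eq_mul_integral ((hdm k).mul (hfm k)).aestronglyMeasurable
      ((hdm l).mul (hfm l)).aestronglyMeasurable
    rw [this, hEg k, hEg l]
  have hEgg_eq : ∀ k, ∫ ω, g k ω * g k ω ∂μ = p * (V + s ^ 2) := by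
    intro k
    have heq : ∀ ω, g k ω * g k ω = d k ω * f k ω ^ 2 := by
      intro ω
      rcases hd01 k ω with h | h <;> simp [hg, h] <;> ring
    have hind2 : IndepFun (d k) (fun ω => f k ω ^ 2) μ := by
      have := (hdf_indep k).comp (φ := id) (ψ := fun x : ℝ => x ^ 2)
        measurable_id (measurable_id.pow_const 2)
      simpa [Function.comp_def] using this
    have := hind2.integral_fun_mul_eq_mul_integral (hdm k).aestronglyMeasurable
      ((hfm k).pow_const 2).aestronglyMeasurable
    simp_rw [heq]
    rw [this, hdp k, hfsq k]
  -- sum and its square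
  set S : Ω → ℝ := fun ω => ∑ k, g k ω with hS
  have hS_int : Integrable S μ := integrable_finset_sum _ fun k _ => hg_int k
  have hS2_int : Integrable (fun ω => S ω * S ω) μ := by
    have : ∀ ω, S ω * S ω = ∑ k, ∑ l, g k ω * g l ω := by
      intro ω; rw [hS, Finset.sum_mul_sum]
    simp_rw [this]
    exact integrable_finset_sum _ fun k _ =>
      integrable_finset_sum _ fun l _ => hgg_int k l
  have hES : ∫ ω, S ω ∂μ = N * (p * s) := by
    rw [hS, integral_finset_sum _ fun k _ => hg_int k]
    simp [hEg]
  have hES2 : ∫ ω, S ω * S ω ∂μ = N * (p * (V + s ^ 2)) + (N * (N - 1)) * ((p * s) * (p * s)) := by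
    have hrw : ∀ ω, S ω * S ω = ∑ k, ∑ l, g k ω * g l ω := by
      intro ω; rw [hS, Finset.sum_mul_sum]
    simp_rw [hrw]
    rw [integral_finset_sum _ fun k _ => integrable_finset_sum _ fun l _ => hgg_int k l]
    have : ∀ k : Fin N, (∫ ω, ∑ l, g k ω * g l ω ∂μ)
        = p * (V + s ^ 2) + (N - 1) * ((p * s) * (p * s)) := by
      intro k
      rw [integral_finset_sum _ fun l _ => hgg_int k l]
      have : ∀ l : Fin N, (∫ ω, g k ω * g l ω ∂μ)
          = ((p * s) * (p * s)) + if l = k then p * (V + s ^ 2) - (p * s) * (p * s) else 0 := by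
        intro l
        by_cases h : l = k
        · subst h; rw [hEgg_eq l]; simp
        · rw [hEgg_ne k l (fun hh => h hh.symm)]; simp [h]
      simp_rw [this]
      rw [Finset.sum_add_distrib, Finset.sum_const, Finset.sum_ite_eq' Finset.univ k]
      simp [Finset.card_univ]
      ring
    simp_rw [this]
    rw [Finset.sum_const, Finset.card_univ]
    simp
    ring
  -- expand the square
  have hexp : ∀ ω, ((1 / (N * p)) * S ω - s) ^ 2
      = (1 / (N * p))^2 * (S ω * S ω) - (2 * (1 / (N * p)) * s) * S ω + s ^ 2 := by
    intro ω; ring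
  calc ∫ ω, ((1 / (N * p)) * ∑ k, d k ω * f k ω - s) ^ 2 ∂μ
      = ∫ ω, ((1 / (N * p))^2 * (S ω * S ω) - (2 * (1 / (N * p)) * s) * S ω + s ^ 2) ∂μ := by
        exact integral_congr_ae (ae_of_all _ fun ω => hexp ω)
    _ = (1 / (N * p))^2 * (∫ ω, S ω * S ω ∂μ)
        - (2 * (1 / (N * p)) * s) * (∫ ω, S ω ∂μ) + s ^ 2 := by
        have h1 : Integrable (fun ω => (1 / (N * p))^2 * (S ω * S ω)
            - (2 * (1 / (N * p)) * s) * S ω) μ :=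
          (hS2_int.const_mul _).sub (hS_int.const_mul _)
        rw [integral_add h1 (integrable_const _),
          integral_sub (hS2_int.const_mul _) (hS_int.const_mul _),
          integral_const_mul, integral_const_mul, integral_const]
        simp
    _ = (V + (1 - p) * s ^ 2) / (p * N) := by
        rw [hES, hES2]
        have hn : (N : ℝ) ≠ 0 := Nat.cast_ne_zero.mpr hN.ne'
        field_simp
        ring
end

section
/- In the MCAR model with unknown mean: under the assumptions that x^(k) are i.i.d. with mean μ, covariance Σ, and Δ independent of the data with all P̂_{ij} > 0 and the matrix Θ = N p̂ p̂ᵀ − P̂ entrywise positive, the estimator Σ̂ = R_y ⊙ Γ̂ − (N ȳ ȳᵀ − R_y) ⊙ Ψ, where R_y = (1/N) Σ_k y^(k)y^(k)ᵀ, Γ̂ is the entrywise inverse of P̂, and Ψ is the entrywise inverse of Θ, satisfies E[Σ̂ | Δ] = Σ. -/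
set_option maxHeartbeats 1000000


open MeasureTheory ProbabilityTheory

private lemma sum01 {α : Type*} (s : Finset α) (f : α → ℝ)
    (hf : ∀ k ∈ s, f k = 0 ∨ f k = 1) (hpos : 0 < ∑ k ∈ s, f k) :
    1 ≤ ∑ k ∈ s, f k := by
  obtain ⟨k, hk, hk1⟩ : ∃ k ∈ s, f k = 1 := by
    by_contra h
    push_neg at h
    have h0 : ∀ k ∈ s, f k = 0 := fun k hk => (hf k hk).resolve_right (h k hk)
    rw [Finset.sum_eq_zero h0] at hpos
    exact lt_irrefl _ hpos
  calc (1:ℝ) = f k := hk1.symm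
    _ ≤ ∑ k ∈ s, f k := Finset.single_le_sum
        (fun a ha => by rcases hf a ha with h | h <;> simp [h]) hk

private lemma sum_ite_diag {N : ℕ} (A B : Fin N × Fin N → ℝ) :
    ∑ p : Fin N × Fin N, (if p.1 = p.2 then A p else B p)
      = (∑ k : Fin N, (A (k, k) - B (k, k))) + ∑ p : Fin N × Fin N, B p := by
  have h : ∀ p : Fin N × Fin N, (if p.1 = p.2 then A p else B p)
      = (if p.1 = p.2 then A p - B p else 0) + B p := by
    intro p; by_cases h : p.1 = p.2 <;> simp [h]
  rw [Finset.sum_congr rfl fun p _ => h p, Finset.sum_add_distrib]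
  congr 1
  rw [Fintype.sum_prod_type]
  refine Finset.sum_congr rfl fun k _ => ?_
  simp

private lemma sum_prod_mul {N : ℕ} (f g : Fin N → ℝ) :
    ∑ p : Fin N × Fin N, f p.1 * g p.2 = (∑ k, f k) * (∑ k, g k) := by
  rw [Finset.sum_mul_sum, Fintype.sum_prod_type]

/-- MCAR with unknown mean. With `y⁽ᵏ⁾ = δ⁽ᵏ⁾ ⊙ x⁽ᵏ⁾`, `x⁽ᵏ⁾` i.i.d.
(mean `μv`, covariance `S`), `Δ` independent of the data, all `P̂ ω i j > 0` and all
`Θ ω i j = N p̂ᵢ p̂ⱼ − P̂ᵢⱼ > 0`, the estimator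
`Σ̂ = R_y ⊙ Γ̂ − (N ȳ ȳᵀ − R_y) ⊙ Ψ` (with `Γ̂ = P̂^{⊙-1}`, `Ψ = Θ^{⊙-1}`) satisfies
`E[Σ̂ | Δ] = S` a.e., entrywise. -/
theorem mcar_unknown_mean_unbiased {Ω : Type*} [MeasureSpace Ω]
    (μ : Measure Ω) [IsProbabilityMeasure μ] {n N : ℕ} (hN : 0 < N)
    (x δ : Fin N → Ω → Fin n → ℝ) (μv : Fin n → ℝ)
    (S : Matrix (Fin n) (Fin n) ℝ)
    (hxm : ∀ k, Measurable (x k)) (hδm : ∀ k, Measurable (δ k))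
    (hind : IndepFun (fun ω k => x k ω) (fun ω k => δ k ω) μ)
    (hiid : iIndepFun x μ)
    (hδ01 : ∀ k ω i, δ k ω i = 0 ∨ δ k ω i = 1)
    (hmean : ∀ k i, ∫ ω, x k ω i ∂μ = μv i)
    (hcov : ∀ k i j, ∫ ω, (x k ω i - μv i) * (x k ω j - μv j) ∂μ = S i j)
    (hint : ∀ k l i j, Integrable (fun ω => x k ω i * x l ω j) μ)
    -- empirical quantities
    (Phat : Ω → Matrix (Fin n) (Fin n) ℝ)
    (hPhat : ∀ ω i j, Phat ω i j = (N : ℝ)⁻¹ * ∑ k, δ k ω i * δ k ω j)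
    (phat : Ω → Fin n → ℝ)
    (hphat : ∀ ω i, phat ω i = (N : ℝ)⁻¹ * ∑ k, δ k ω i)
    (Θ : Ω → Matrix (Fin n) (Fin n) ℝ)
    (hΘ : ∀ ω i j, Θ ω i j = (N : ℝ) * phat ω i * phat ω j - Phat ω i j)
    (hPhatpos : ∀ ω i j, 0 < Phat ω i j)
    (hΘpos : ∀ ω i j, 0 < Θ ω i j)
    (Ry : Ω → Matrix (Fin n) (Fin n) ℝ)
    (hRy : ∀ ω i j, Ry ω i j =
      (N : ℝ)⁻¹ * ∑ k, (δ k ω i * x k ω i) * (δ k ω j * x k ω j))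
    (ybar : Ω → Fin n → ℝ)
    (hybar : ∀ ω i, ybar ω i = (N : ℝ)⁻¹ * ∑ k, δ k ω i * x k ω i) :
    ∀ i j,
      (μ[fun ω => Ry ω i j * (Phat ω i j)⁻¹
          - ((N : ℝ) * (ybar ω i * ybar ω j) - Ry ω i j) * (Θ ω i j)⁻¹
        | MeasurableSpace.comap (fun ω (k : Fin N) => δ k ω) inferInstance])
      =ᵐ[μ] fun _ => S i j := by
  intro i j
  classical
  have hN0 : (N : ℝ) ≠ 0 := Nat.cast_ne_zero.2 hN.ne'
  have hNpos : (0 : ℝ) < N := Nat.cast_pos.2 hN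
  -- everything that needs the ambient measurable-space instance, before we
  -- introduce any local `MeasurableSpace Ω` hypotheses
  have hxev : ∀ (k : Fin N) (a : Fin n), Measurable (fun ω => x k ω a) :=
    fun k a => (measurable_pi_apply a).comp (hxm k)
  have hx1 : ∀ (k : Fin N) (a : Fin n), Integrable (fun ω => x k ω a) μ := by
    intro k a
    have hgint : Integrable (fun ω => (x k ω a * x k ω a + 1) / 2) μ :=
      ((hint k k a a).add (integrable_const 1)).div_const 2
    refine Integrable.mono' hgint
      (hxev k a).aestronglyMeasurable (Filter.Eventually.of_forall fun ω => ?_)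
    rw [Real.norm_eq_abs]
    nlinarith [sq_nonneg (|x k ω a| - 1), abs_mul_abs_self (x k ω a), abs_nonneg (x k ω a)]
  have hdiagEXX : ∀ k : Fin N, ∫ ω, x k ω i * x k ω j ∂μ = S i j + μv i * μv j := by
    intro k
    have hS := hcov k i j
    have hexp : (fun ω => (x k ω i - μv i) * (x k ω j - μv j))
        = fun ω => x k ω i * x k ω j
          - (μv j * x k ω i + (μv i * x k ω j - μv i * μv j)) := by
      funext ω; ring
    have hI0 : Integrable (fun ω => μv i * x k ω j - μv i * μv j) μ :=
      ((hx1 k j).const_mul _).sub (integrable_const _)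
    have hI1 : Integrable
        (fun ω => μv j * x k ω i + (μv i * x k ω j - μv i * μv j)) μ :=
      ((hx1 k i).const_mul _).add hI0
    rw [hexp, integral_sub (hint k k i j) hI1,
      integral_add ((hx1 k i).const_mul _) hI0,
      integral_sub ((hx1 k j).const_mul _) (integrable_const _),
      integral_const_mul, integral_const_mul, hmean, hmean, integral_const] at hS
    simp only [probReal_univ, measure_univ, ENNReal.toReal_one, smul_eq_mul, one_mul] at hS
    linarith
  have hoffEXX : ∀ p : Fin N × Fin N, p.1 ≠ p.2 →
      ∫ ω, x p.1 ω i * x p.2 ω j ∂μ = μv i * μv j := by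
    intro p hp
    have hij : IndepFun (fun ω => x p.1 ω i) (fun ω => x p.2 ω j) μ :=
      (hiid.indepFun hp).comp (measurable_pi_apply i) (measurable_pi_apply j)
    have hmul := hij.integral_mul_eq_mul_integral (hx1 p.1 i).aestronglyMeasurable
      (hx1 p.2 j).aestronglyMeasurable
    calc ∫ ω, x p.1 ω i * x p.2 ω j ∂μ
        = ∫ ω, ((fun ω => x p.1 ω i) * fun ω => x p.2 ω j) ω ∂μ := rfl
      _ = (∫ ω, x p.1 ω i ∂μ) * ∫ ω, x p.2 ω j ∂μ := hmul
      _ = μv i * μv j := by rw [hmean, hmean]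
  have hmδ0 : MeasurableSpace.comap (fun ω (k : Fin N) => δ k ω) inferInstance
      ≤ ‹MeasureSpace Ω›.toMeasurableSpace :=
    (measurable_pi_lambda _ hδm).comap_le
  have hmx0 : MeasurableSpace.comap (fun ω (k : Fin N) => x k ω) inferInstance
      ≤ ‹MeasureSpace Ω›.toMeasurableSpace :=
    (measurable_pi_lambda _ hxm).comap_le
  -- now introduce abbreviations
  set X : Fin N × Fin N → Ω → ℝ := fun p ω => x p.1 ω i * x p.2 ω j with hXdef
  set c : Fin N × Fin N → Ω → ℝ := fun p ω =>
    δ p.1 ω i * δ p.2 ω j *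
      (if p.1 = p.2 then (N : ℝ)⁻¹ * (Phat ω i j)⁻¹
        else -((N : ℝ)⁻¹ * (Θ ω i j)⁻¹)) with hcdef
  set mc : Fin N × Fin N → ℝ :=
    fun p => if p.1 = p.2 then S i j + μv i * μv j else μv i * μv j with hmcdef
  set mx : MeasurableSpace Ω :=
    MeasurableSpace.comap (fun ω (k : Fin N) => x k ω) inferInstance with hmxdef
  set mδ : MeasurableSpace Ω :=
    MeasurableSpace.comap (fun ω (k : Fin N) => δ k ω) inferInstance with hmδdef
  -- measurability w.r.t. the comap σ-algebras
  have hDδ : Measurable[mδ] (fun ω (k : Fin N) => δ k ω) := by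
    rw [hmδdef]; exact comap_measurable _
  have hDx : Measurable[mx] (fun ω (k : Fin N) => x k ω) := by
    rw [hmxdef]; exact comap_measurable _
  have hδmδ : ∀ (k : Fin N) (a : Fin n), Measurable[mδ] (fun ω => δ k ω a) := by
    intro k a
    exact (measurable_pi_apply a).comp ((measurable_pi_apply k).comp hDδ)
  have hPδ : Measurable[mδ] (fun ω => Phat ω i j) := by
    have h : (fun ω => Phat ω i j) = fun ω => (N : ℝ)⁻¹ * ∑ k, δ k ω i * δ k ω j :=
      funext fun ω => hPhat ω i j
    rw [h]
    exact (Finset.measurable_sum _ fun k _ => (hδmδ k i).mul (hδmδ k j)).const_mul _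
  have hθδ : Measurable[mδ] (fun ω => Θ ω i j) := by
    have h : (fun ω => Θ ω i j) = fun ω =>
        (N : ℝ) * ((N : ℝ)⁻¹ * ∑ k, δ k ω i) * ((N : ℝ)⁻¹ * ∑ k, δ k ω j) - Phat ω i j := by
      funext ω; rw [hΘ, hphat, hphat]
    rw [h]
    exact ((((Finset.measurable_sum _ fun k _ => hδmδ k i).const_mul _).const_mul _).mul
      ((Finset.measurable_sum _ fun k _ => hδmδ k j).const_mul _)).sub hPδ
  have hcsm : ∀ p, StronglyMeasurable[mδ] (c p) := by
    intro p
    apply Measurable.stronglyMeasurable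
    by_cases hp : p.1 = p.2
    · simp only [hcdef, if_pos hp]
      exact ((hδmδ p.1 i).mul (hδmδ p.2 j)).mul (hPδ.inv.const_mul _)
    · simp only [hcdef, if_neg hp]
      exact ((hδmδ p.1 i).mul (hδmδ p.2 j)).mul ((hθδ.inv.const_mul _).neg)
  have hXsmx : ∀ p, StronglyMeasurable[mx] (X p) := by
    intro p
    apply Measurable.stronglyMeasurable
    exact ((measurable_pi_apply i).comp ((measurable_pi_apply p.1).comp hDx)).mul
      ((measurable_pi_apply j).comp ((measurable_pi_apply p.2).comp hDx))
  -- lower bounds on Phat and Θ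
  have hsumδδpos : ∀ ω, 0 < ∑ k, δ k ω i * δ k ω j := by
    intro ω
    have h := hPhatpos ω i j
    rw [hPhat] at h
    have h2 : (0 : ℝ) < (N : ℝ) * ((N : ℝ)⁻¹ * ∑ k, δ k ω i * δ k ω j) := mul_pos hNpos h
    rwa [← mul_assoc, mul_inv_cancel₀ hN0, one_mul] at h2
  have hPge : ∀ ω, (N : ℝ)⁻¹ ≤ Phat ω i j := by
    intro ω
    rw [hPhat]
    have h1 : 1 ≤ ∑ k, δ k ω i * δ k ω j := by
      refine sum01 _ _ (fun k _ => ?_) (hsumδδpos ω)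
      rcases hδ01 k ω i with h | h <;> rcases hδ01 k ω j with h' | h' <;> simp [h, h']
    calc (N : ℝ)⁻¹ = (N : ℝ)⁻¹ * 1 := (mul_one _).symm
      _ ≤ (N : ℝ)⁻¹ * ∑ k, δ k ω i * δ k ω j :=
          mul_le_mul_of_nonneg_left h1 (by positivity)
  have hθform : ∀ ω, (N : ℝ) * Θ ω i j
      = ∑ p ∈ (Finset.univ : Finset (Fin N)).offDiag, δ p.1 ω i * δ p.2 ω j := by
    intro ω
    have hsplit : (∑ k, δ k ω i) * (∑ k, δ k ω j)
        = (∑ k, δ k ω i * δ k ω j)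
          + ∑ p ∈ (Finset.univ : Finset (Fin N)).offDiag, δ p.1 ω i * δ p.2 ω j := by
      calc (∑ k, δ k ω i) * (∑ k, δ k ω j)
          = ∑ p : Fin N × Fin N,
            (fun k => δ k ω i) p.1 * (fun k => δ k ω j) p.2 := (sum_prod_mul _ _).symm
        _ = ∑ p ∈ Finset.univ ×ˢ Finset.univ,
            (fun k => δ k ω i) p.1 * (fun k => δ k ω j) p.2 := by
            rw [Finset.univ_product_univ]
        _ = ∑ p ∈ (Finset.univ : Finset (Fin N)).diag
              ∪ (Finset.univ : Finset (Fin N)).offDiag,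
            (fun k => δ k ω i) p.1 * (fun k => δ k ω j) p.2 := by
            rw [Finset.diag_union_offDiag]
        _ = (∑ k, δ k ω i * δ k ω j)
            + ∑ p ∈ (Finset.univ : Finset (Fin N)).offDiag, δ p.1 ω i * δ p.2 ω j := by
            rw [Finset.sum_union (Finset.disjoint_diag_offDiag _), Finset.sum_diag]
    have hθω := hΘ ω i j
    rw [hphat, hphat, hPhat] at hθω
    rw [hθω]
    field_simp
    linarith [hsplit]
  have hθge : ∀ ω, (N : ℝ)⁻¹ ≤ Θ ω i j := by
    intro ω
    have hpos2 : 0 < ∑ p ∈ (Finset.univ : Finset (Fin N)).offDiag,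
        δ p.1 ω i * δ p.2 ω j := by
      rw [← hθform]; exact mul_pos hNpos (hΘpos ω i j)
    have h1 : 1 ≤ ∑ p ∈ (Finset.univ : Finset (Fin N)).offDiag,
        δ p.1 ω i * δ p.2 ω j := by
      refine sum01 _ _ (fun p _ => ?_) hpos2
      rcases hδ01 p.1 ω i with h | h <;> rcases hδ01 p.2 ω j with h' | h' <;> simp [h, h']
    have h2 : (N : ℝ)⁻¹ * 1 ≤ (N : ℝ)⁻¹ * ((N : ℝ) * Θ ω i j) := by
      rw [hθform]
      exact mul_le_mul_of_nonneg_left h1 (by positivity)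
    rwa [mul_one, ← mul_assoc, inv_mul_cancel₀ hN0, one_mul] at h2
  -- boundedness of the coefficients
  have hcbd : ∀ p ω', ‖c p ω'‖ ≤ 1 := by
    intro p ω
    have hP := hPhatpos ω i j
    have hT := hΘpos ω i j
    have h1 : (N : ℝ)⁻¹ * (Phat ω i j)⁻¹ ≤ 1 := by
      rw [← mul_inv]
      refine inv_le_one_of_one_le₀ ?_
      calc (1 : ℝ) = N * (N : ℝ)⁻¹ := (mul_inv_cancel₀ hN0).symm
        _ ≤ N * Phat ω i j := mul_le_mul_of_nonneg_left (hPge ω) hNpos.le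
    have h2 : (N : ℝ)⁻¹ * (Θ ω i j)⁻¹ ≤ 1 := by
      rw [← mul_inv]
      refine inv_le_one_of_one_le₀ ?_
      calc (1 : ℝ) = N * (N : ℝ)⁻¹ := (mul_inv_cancel₀ hN0).symm
        _ ≤ N * Θ ω i j := mul_le_mul_of_nonneg_left (hθge ω) hNpos.le
    have hco : ‖if p.1 = p.2 then (N : ℝ)⁻¹ * (Phat ω i j)⁻¹
        else -((N : ℝ)⁻¹ * (Θ ω i j)⁻¹)‖ ≤ 1 := by
      split_ifs
      · rw [Real.norm_eq_abs, abs_of_nonneg (by positivity)]; exact h1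
      · rw [Real.norm_eq_abs, abs_neg, abs_of_nonneg (by positivity)]; exact h2
    simp only [hcdef]
    rcases hδ01 p.1 ω i with h | h <;> rcases hδ01 p.2 ω j with h' | h' <;>
      simp only [h, h', zero_mul, mul_zero, one_mul, norm_zero, mul_one] <;>
      first
        | exact zero_le_one
        | exact hco
  -- integrability
  have hXint : ∀ p : Fin N × Fin N, Integrable (X p) μ := fun p => hint p.1 p.2 i j
  have hcXint : ∀ p, Integrable (fun ω => c p ω * X p ω) μ := fun p =>
    Integrable.bdd_mul (hXint p) ((hcsm p).mono hmδ0).aestronglyMeasurable (Filter.Eventually.of_forall (hcbd p))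
  -- expected values
  have hEXX : ∀ p : Fin N × Fin N, ∫ ω, X p ω ∂μ = mc p := by
    intro p
    by_cases hp : p.1 = p.2
    · simp only [hmcdef, if_pos hp, hXdef]
      rw [hp]
      exact hdiagEXX p.2
    · simp only [hmcdef, if_neg hp, hXdef]
      exact hoffEXX p hp
  -- conditional expectation computations
  have hindep : Indep mx mδ μ := hind
  have hcondX : ∀ p, μ[X p | mδ] =ᵐ[μ] fun _ => mc p := by
    intro p
    have h := condExp_indep_eq hmx0 hmδ0 (hXsmx p) hindep
    have he : (fun _ : Ω => ∫ ω, X p ω ∂μ) = fun _ : Ω => mc p :=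
      funext fun _ => hEXX p
    rw [he] at h
    exact h
  have hstep2 : ∀ p, μ[fun ω => c p ω * X p ω | mδ] =ᵐ[μ] fun ω => c p ω * mc p := by
    intro p
    have h1 := condExp_mul_of_stronglyMeasurable_left (g := X p) (hcsm p) (hcXint p) (hXint p)
    refine h1.trans ?_
    filter_upwards [hcondX p] with ω hω
    simp only [Pi.mul_apply, hω]
  have hstep1 : μ[fun ω => ∑ p : Fin N × Fin N, c p ω * X p ω | mδ]
      =ᵐ[μ] fun ω => ∑ p : Fin N × Fin N, c p ω * mc p := by
    have hfun : (fun ω => ∑ p : Fin N × Fin N, c p ω * X p ω)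
        = ∑ p : Fin N × Fin N, (fun ω => c p ω * X p ω) := by
      funext ω; rw [Finset.sum_apply]
    rw [hfun]
    refine (condExp_finsetSum (fun p _ => hcXint p) mδ).trans ?_
    have hall : ∀ᵐ ω ∂μ, ∀ p : Fin N × Fin N,
        (μ[fun ω' => c p ω' * X p ω' | mδ]) ω = c p ω * mc p := ae_all_iff.2 hstep2
    filter_upwards [hall] with ω hω
    rw [Finset.sum_apply]
    exact Finset.sum_congr rfl fun p _ => hω p
  -- pointwise identity for the estimator
  have keyA : (fun ω => Ry ω i j * (Phat ω i j)⁻¹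
      - ((N : ℝ) * (ybar ω i * ybar ω j) - Ry ω i j) * (Θ ω i j)⁻¹)
      = fun ω => ∑ p : Fin N × Fin N, c p ω * X p ω := by
    funext ω
    have hPne : Phat ω i j ≠ 0 := (hPhatpos ω i j).ne'
    have hTne : Θ ω i j ≠ 0 := (hΘpos ω i j).ne'
    have h1 : ∀ p : Fin N × Fin N, c p ω * X p ω =
        if p.1 = p.2
        then δ p.1 ω i * δ p.2 ω j * ((N : ℝ)⁻¹ * (Phat ω i j)⁻¹) * (x p.1 ω i * x p.2 ω j)
        else δ p.1 ω i * δ p.2 ω j * (-((N : ℝ)⁻¹ * (Θ ω i j)⁻¹))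
          * (x p.1 ω i * x p.2 ω j) := by
      intro p
      by_cases hp : p.1 = p.2
      · simp only [hcdef, hXdef, if_pos hp]
      · simp only [hcdef, hXdef, if_neg hp]
    rw [Finset.sum_congr rfl fun p _ => h1 p, sum_ite_diag]
    have hdiag : (∑ k : Fin N,
        (δ k ω i * δ k ω j * ((N : ℝ)⁻¹ * (Phat ω i j)⁻¹) * (x k ω i * x k ω j)
          - δ k ω i * δ k ω j * (-((N : ℝ)⁻¹ * (Θ ω i j)⁻¹)) * (x k ω i * x k ω j)))
        = ((Phat ω i j)⁻¹ + (Θ ω i j)⁻¹) * Ry ω i j := by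
      calc (∑ k : Fin N,
          (δ k ω i * δ k ω j * ((N : ℝ)⁻¹ * (Phat ω i j)⁻¹) * (x k ω i * x k ω j)
            - δ k ω i * δ k ω j * (-((N : ℝ)⁻¹ * (Θ ω i j)⁻¹)) * (x k ω i * x k ω j)))
          = ∑ k : Fin N, ((Phat ω i j)⁻¹ + (Θ ω i j)⁻¹)
            * ((N : ℝ)⁻¹ * ((δ k ω i * x k ω i) * (δ k ω j * x k ω j))) :=
            Finset.sum_congr rfl fun k _ => by ring
        _ = ((Phat ω i j)⁻¹ + (Θ ω i j)⁻¹)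
            * ((N : ℝ)⁻¹ * ∑ k, (δ k ω i * x k ω i) * (δ k ω j * x k ω j)) := by
            rw [← Finset.mul_sum, ← Finset.mul_sum]
        _ = ((Phat ω i j)⁻¹ + (Θ ω i j)⁻¹) * Ry ω i j := by rw [← hRy]
    have hoff : (∑ p : Fin N × Fin N,
        δ p.1 ω i * δ p.2 ω j * (-((N : ℝ)⁻¹ * (Θ ω i j)⁻¹)) * (x p.1 ω i * x p.2 ω j))
        = -((N : ℝ)⁻¹ * (Θ ω i j)⁻¹)
          * ((∑ k, δ k ω i * x k ω i) * (∑ k, δ k ω j * x k ω j)) := by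
      calc (∑ p : Fin N × Fin N,
          δ p.1 ω i * δ p.2 ω j * (-((N : ℝ)⁻¹ * (Θ ω i j)⁻¹)) * (x p.1 ω i * x p.2 ω j))
          = ∑ p : Fin N × Fin N, -((N : ℝ)⁻¹ * (Θ ω i j)⁻¹)
            * ((fun k => δ k ω i * x k ω i) p.1 * (fun k => δ k ω j * x k ω j) p.2) :=
            Finset.sum_congr rfl fun p _ => by ring
        _ = -((N : ℝ)⁻¹ * (Θ ω i j)⁻¹) * ∑ p : Fin N × Fin N,
            (fun k => δ k ω i * x k ω i) p.1 * (fun k => δ k ω j * x k ω j) p.2 := by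
            rw [← Finset.mul_sum]
        _ = -((N : ℝ)⁻¹ * (Θ ω i j)⁻¹)
            * ((∑ k, δ k ω i * x k ω i) * (∑ k, δ k ω j * x k ω j)) :=
            congrArg (fun z => -((N : ℝ)⁻¹ * (Θ ω i j)⁻¹) * z)
              (sum_prod_mul (fun k => δ k ω i * x k ω i) (fun k => δ k ω j * x k ω j))
    rw [hdiag, hoff, hRy, hybar, hybar]
    field_simp
    ring
  -- final algebraic identity
  have keyC : ∀ ω, (∑ p : Fin N × Fin N, c p ω * mc p) = S i j := by
    intro ω
    have hPne : Phat ω i j ≠ 0 := (hPhatpos ω i j).ne'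
    have hTne : Θ ω i j ≠ 0 := (hΘpos ω i j).ne'
    have h1 : ∀ p : Fin N × Fin N, c p ω * mc p =
        if p.1 = p.2
        then δ p.1 ω i * δ p.2 ω j * ((N : ℝ)⁻¹ * (Phat ω i j)⁻¹) * (S i j + μv i * μv j)
        else δ p.1 ω i * δ p.2 ω j * (-((N : ℝ)⁻¹ * (Θ ω i j)⁻¹)) * (μv i * μv j) := by
      intro p
      by_cases hp : p.1 = p.2
      · simp only [hcdef, hmcdef, if_pos hp]
      · simp only [hcdef, hmcdef, if_neg hp]
    rw [Finset.sum_congr rfl fun p _ => h1 p, sum_ite_diag]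
    have hdiag : (∑ k : Fin N,
        (δ k ω i * δ k ω j * ((N : ℝ)⁻¹ * (Phat ω i j)⁻¹) * (S i j + μv i * μv j)
          - δ k ω i * δ k ω j * (-((N : ℝ)⁻¹ * (Θ ω i j)⁻¹)) * (μv i * μv j)))
        = (∑ k, δ k ω i * δ k ω j)
          * ((N : ℝ)⁻¹ * (Phat ω i j)⁻¹ * (S i j + μv i * μv j)
            + (N : ℝ)⁻¹ * (Θ ω i j)⁻¹ * (μv i * μv j)) := by
      rw [Finset.sum_mul]
      exact Finset.sum_congr rfl fun k _ => by ring
    have hoff : (∑ p : Fin N × Fin N,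
        δ p.1 ω i * δ p.2 ω j * (-((N : ℝ)⁻¹ * (Θ ω i j)⁻¹)) * (μv i * μv j))
        = -((N : ℝ)⁻¹ * (Θ ω i j)⁻¹) * (μv i * μv j)
          * ((∑ k, δ k ω i) * (∑ k, δ k ω j)) := by
      calc (∑ p : Fin N × Fin N,
          δ p.1 ω i * δ p.2 ω j * (-((N : ℝ)⁻¹ * (Θ ω i j)⁻¹)) * (μv i * μv j))
          = ∑ p : Fin N × Fin N, -((N : ℝ)⁻¹ * (Θ ω i j)⁻¹) * (μv i * μv j)
            * ((fun k => δ k ω i) p.1 * (fun k => δ k ω j) p.2) :=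
            Finset.sum_congr rfl fun p _ => by ring
        _ = -((N : ℝ)⁻¹ * (Θ ω i j)⁻¹) * (μv i * μv j) * ∑ p : Fin N × Fin N,
            (fun k => δ k ω i) p.1 * (fun k => δ k ω j) p.2 := by rw [← Finset.mul_sum]
        _ = -((N : ℝ)⁻¹ * (Θ ω i j)⁻¹) * (μv i * μv j)
            * ((∑ k, δ k ω i) * (∑ k, δ k ω j)) :=
            congrArg (fun z => -((N : ℝ)⁻¹ * (Θ ω i j)⁻¹) * (μv i * μv j) * z)
              (sum_prod_mul (fun k => δ k ω i) (fun k => δ k ω j))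
    rw [hdiag, hoff]
    have hs1 : (∑ k, δ k ω i * δ k ω j) = (N : ℝ) * Phat ω i j := by
      rw [hPhat, ← mul_assoc, mul_inv_cancel₀ hN0, one_mul]
    have hs2 : (∑ k, δ k ω i) = (N : ℝ) * phat ω i := by
      rw [hphat, ← mul_assoc, mul_inv_cancel₀ hN0, one_mul]
    have hs3 : (∑ k, δ k ω j) = (N : ℝ) * phat ω j := by
      rw [hphat, ← mul_assoc, mul_inv_cancel₀ hN0, one_mul]
    have huv : (N : ℝ) * phat ω i * ((N : ℝ) * phat ω j)
        = (N : ℝ) * (Θ ω i j + Phat ω i j) := by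
      have h := hΘ ω i j
      linear_combination (-(N : ℝ)) * h
    rw [hs1, hs2, hs3, huv]
    field_simp
    ring
  -- conclude
  rw [keyA]
  have hfinal : (fun ω => ∑ p : Fin N × Fin N, c p ω * mc p) = fun _ : Ω => S i j :=
    funext keyC
  rw [hfinal] at hstep1
  exact hstep1
end

section
/- Let x^(k) be i.i.d. with mean μ and covariance Σ, δ^(k) i.i.d. 0-1 vectors independent of the data with E[δ] = p and E[δδᵀ] = P, and y^(k) = δ^(k) ⊙ x^(k). Then with ȳ = (1/N)Σ_k y^(k) and R_y = (1/N)Σ_k y^(k)y^(k)ᵀ, one has E[N² ȳ ȳᵀ − N R_y] = N(N−1) · (p pᵀ ⊙ μ μᵀ); consequently (1/(N−1))(N ȳȳᵀ − R_y) ⊙ γγᵀ, with γ the entrywise inverse of p, is an unbiased estimator of μμᵀ. -/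
open MeasureTheory ProbabilityTheory

/-- With `x⁽ᵏ⁾` i.i.d. (mean `μv`, covariance `S`), `δ⁽ᵏ⁾` i.i.d. 0-1 vectors
independent of the data with `E[δ] = p`, `E[δδᵀ] = P`, and `y⁽ᵏ⁾ = δ⁽ᵏ⁾ ⊙ x⁽ᵏ⁾`:
`E[N² ȳ ȳᵀ − N R_y] = N(N−1)(p pᵀ ⊙ μv μvᵀ)` entrywise, and consequently
`(1/(N−1))(N ȳȳᵀ − R_y) ⊙ γγᵀ` is an unbiased estimator for `μv μvᵀ`. -/
theorem mean_outer_unbiased {Ω : Type*} [MeasureSpace Ω]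
    (μ : Measure Ω) [IsProbabilityMeasure μ] {n N : ℕ} (hN : 1 < N)
    (x δ : Fin N → Ω → Fin n → ℝ) (μv p : Fin n → ℝ)
    (S P : Matrix (Fin n) (Fin n) ℝ)
    (hxm : ∀ k, Measurable (x k)) (hδm : ∀ k, Measurable (δ k))
    -- the pairs (x⁽ᵏ⁾, δ⁽ᵏ⁾) are jointly independent across k
    (hiid : iIndepFun (fun k ω => (x k ω, δ k ω)) μ)
    -- within each k, the missing-data pattern is independent of the data
    (hind : ∀ k, IndepFun (x k) (δ k) μ)
    (hδ01 : ∀ k ω i, δ k ω i = 0 ∨ δ k ω i = 1)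
    (hδp : ∀ k i, ∫ ω, δ k ω i ∂μ = p i)
    (hppos : ∀ i, 0 < p i)
    (hP : ∀ k i j, ∫ ω, δ k ω i * δ k ω j ∂μ = P i j)
    (hmean : ∀ k i, ∫ ω, x k ω i ∂μ = μv i)
    (hcov : ∀ k i j, ∫ ω, (x k ω i - μv i) * (x k ω j - μv j) ∂μ = S i j)
    (hint : ∀ k l i j, Integrable (fun ω => x k ω i * x l ω j) μ) :
    (∀ i j, ∫ ω,
        ((N : ℝ) ^ 2 * (((N : ℝ)⁻¹ * ∑ k, δ k ω i * x k ω i) *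
            ((N : ℝ)⁻¹ * ∑ k, δ k ω j * x k ω j))
          - (N : ℝ) * ((N : ℝ)⁻¹ * ∑ k, (δ k ω i * x k ω i) * (δ k ω j * x k ω j))) ∂μ
        = (N : ℝ) * ((N : ℝ) - 1) * (p i * p j * (μv i * μv j))) ∧
    (∀ i j, ∫ ω,
        (1 / ((N : ℝ) - 1)) *
          ((N : ℝ) * (((N : ℝ)⁻¹ * ∑ k, δ k ω i * x k ω i) *
              ((N : ℝ)⁻¹ * ∑ k, δ k ω j * x k ω j))
            - (N : ℝ)⁻¹ * ∑ k, (δ k ω i * x k ω i) * (δ k ω j * x k ω j)) *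
          ((p i)⁻¹ * (p j)⁻¹) ∂μ
        = μv i * μv j) := by
  classical
  have hNR : (1 : ℝ) < (N : ℝ) := by exact_mod_cast hN
  have hNne : (N : ℝ) ≠ 0 := by linarith
  have hN1ne : (N : ℝ) - 1 ≠ 0 := by linarith
  have mx : ∀ k i, Measurable fun ω => x k ω i := fun k i =>
    (measurable_pi_apply i).comp (hxm k)
  have mδ : ∀ k i, Measurable fun ω => δ k ω i := fun k i =>
    (measurable_pi_apply i).comp (hδm k)
  have mY : ∀ k i, Measurable fun ω => δ k ω i * x k ω i := fun k i => (mδ k i).mul (mx k i)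
  -- integrability of products of the y's
  have hYint2 : ∀ k l i j,
      Integrable (fun ω => (δ k ω i * x k ω i) * (δ l ω j * x l ω j)) μ := by
    intro k l i j
    refine (hint k l i j).abs.mono' ((mY k i).mul (mY l j)).aestronglyMeasurable ?_
    filter_upwards with ω
    rcases hδ01 k ω i with h | h <;> rcases hδ01 l ω j with h' | h' <;>
      simp [h, h', Real.norm_eq_abs, abs_mul, abs_nonneg, mul_comm, mul_left_comm, mul_assoc]
    all_goals positivity
  -- mean of each y entry
  have hEY : ∀ k i, ∫ ω, δ k ω i * x k ω i ∂μ = p i * μv i := by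
    intro k i
    have hI : IndepFun (fun ω => δ k ω i) (fun ω => x k ω i) μ :=
      ((hind k).symm).comp (measurable_pi_apply i) (measurable_pi_apply i)
    have := hI.integral_mul_eq_mul_integral (mδ k i).aestronglyMeasurable (mx k i).aestronglyMeasurable
    simpa [hδp k i, hmean k i] using this
  -- cross moments for distinct samples
  have hcross : ∀ i j k l, k ≠ l →
      ∫ ω, (δ k ω i * x k ω i) * (δ l ω j * x l ω j) ∂μ
        = (p i * μv i) * (p j * μv j) := by
    intro i j k l hkl
    have hpair : IndepFun (fun ω => (x k ω, δ k ω)) (fun ω => (x l ω, δ l ω)) μ :=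
      hiid.indepFun hkl
    have hI : IndepFun (fun ω => δ k ω i * x k ω i) (fun ω => δ l ω j * x l ω j) μ :=
      hpair.comp
        (((measurable_pi_apply i).comp measurable_snd).mul
          ((measurable_pi_apply i).comp measurable_fst))
        (((measurable_pi_apply j).comp measurable_snd).mul
          ((measurable_pi_apply j).comp measurable_fst))
    have := hI.integral_mul_eq_mul_integral (mY k i).aestronglyMeasurable (mY l j).aestronglyMeasurable
    simpa [hEY] using this
  -- key computation
  have key : ∀ i j,
      ∫ ω, ((∑ k, δ k ω i * x k ω i) * (∑ l, δ l ω j * x l ω j)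
            - ∑ k, (δ k ω i * x k ω i) * (δ k ω j * x k ω j)) ∂μ
        = (N : ℝ) * ((N : ℝ) - 1) * (p i * p j * (μv i * μv j)) := by
    intro i j
    have expand : (fun ω => (∑ k, δ k ω i * x k ω i) * (∑ l, δ l ω j * x l ω j)
            - ∑ k, (δ k ω i * x k ω i) * (δ k ω j * x k ω j))
        = fun ω => ∑ k, ∑ l ∈ Finset.univ.erase k,
            (δ k ω i * x k ω i) * (δ l ω j * x l ω j) := by
      funext ω
      rw [Finset.sum_mul_sum, ← Finset.sum_sub_distrib]
      refine Finset.sum_congr rfl fun k _ => ?_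
      have h0 := Finset.sum_erase_add Finset.univ
        (fun l => (δ k ω i * x k ω i) * (δ l ω j * x l ω j)) (Finset.mem_univ k)
      linarith [h0]
    rw [expand,
      integral_finset_sum _ (fun k _ => integrable_finset_sum _ (fun l _ => hYint2 k l i j))]
    have hterm : ∀ k ∈ Finset.univ,
        (∫ ω, ∑ l ∈ Finset.univ.erase k, (δ k ω i * x k ω i) * (δ l ω j * x l ω j) ∂μ)
          = ((N : ℝ) - 1) * ((p i * μv i) * (p j * μv j)) := by
      intro k _
      rw [integral_finset_sum _ (fun l _ => hYint2 k l i j),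
        Finset.sum_congr rfl (fun l hl => hcross i j k l (Finset.ne_of_mem_erase hl).symm),
        Finset.sum_const, Finset.card_erase_of_mem (Finset.mem_univ k), Finset.card_univ,
        Fintype.card_fin, nsmul_eq_mul]
      congr 1
      rw [Nat.cast_sub hN.le, Nat.cast_one]
    rw [Finset.sum_congr rfl hterm, Finset.sum_const, Finset.card_univ, Fintype.card_fin,
      nsmul_eq_mul]
    ring
  constructor
  · intro i j
    have e : (fun ω =>
        ((N : ℝ) ^ 2 * (((N : ℝ)⁻¹ * ∑ k, δ k ω i * x k ω i) *
            ((N : ℝ)⁻¹ * ∑ k, δ k ω j * x k ω j))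
          - (N : ℝ) * ((N : ℝ)⁻¹ * ∑ k, (δ k ω i * x k ω i) * (δ k ω j * x k ω j))))
        = fun ω => (∑ k, δ k ω i * x k ω i) * (∑ l, δ l ω j * x l ω j)
            - ∑ k, (δ k ω i * x k ω i) * (δ k ω j * x k ω j) := by
      funext ω
      have hu : (N : ℝ) * (N : ℝ)⁻¹ = 1 := mul_inv_cancel₀ hNne
      linear_combination (((N : ℝ) * (N : ℝ)⁻¹ + 1) * (∑ k, δ k ω i * x k ω i) *
        (∑ k, δ k ω j * x k ω j) - ∑ k, (δ k ω i * x k ω i) * (δ k ω j * x k ω j)) * hu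
    rw [e, key i j]
  · intro i j
    have e : (fun ω =>
        (1 / ((N : ℝ) - 1)) *
          ((N : ℝ) * (((N : ℝ)⁻¹ * ∑ k, δ k ω i * x k ω i) *
              ((N : ℝ)⁻¹ * ∑ k, δ k ω j * x k ω j))
            - (N : ℝ)⁻¹ * ∑ k, (δ k ω i * x k ω i) * (δ k ω j * x k ω j)) *
          ((p i)⁻¹ * (p j)⁻¹))
        = fun ω => ((1 / ((N : ℝ) - 1)) * (N : ℝ)⁻¹ * ((p i)⁻¹ * (p j)⁻¹)) *
            ((∑ k, δ k ω i * x k ω i) * (∑ l, δ l ω j * x l ω j)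
              - ∑ k, (δ k ω i * x k ω i) * (δ k ω j * x k ω j)) := by
      funext ω
      have hu : (N : ℝ) * (N : ℝ)⁻¹ = 1 := mul_inv_cancel₀ hNne
      linear_combination ((1 / ((N : ℝ) - 1)) * ((p i)⁻¹ * (p j)⁻¹) * (N : ℝ)⁻¹ *
        (∑ k, δ k ω i * x k ω i) * (∑ k, δ k ω j * x k ω j)) * hu
    rw [e, integral_const_mul, key i j]
    have hpi := (hppos i).ne'
    have hpj := (hppos j).ne'
    field_simp
end
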